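/- If T is a tree with at least two vertices, then the Cartesian product graph T □ K₃ has divisorial gonality gon(T □ K₃) = 3. -/

import Mathlib

/-- A finite loopless multigraph: a finite vertex type, a finite edge type,
and an assignment of an unordered pair of distinct endpoints to each edge. -/
structure Multigraph where
  V : Type
  E : Type
  [fintypeV : Fintype V]
  [fintypeE : Fintype E]
  [decEqV : DecidableEq V]
  ends : E → Sym2 V
  loopless : ∀ e, ¬ (ends e).IsDiag

attribute [instance] Multigraph.fintypeV Multigraph.fintypeE Multigraph.decEqV

namespace Multigraph

/-- The graph obtained by deleting the edges in `W` is connected (finite graphs are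
connected iff the vertex set is nonempty and every nonempty proper vertex subset
has an edge leaving it). -/
def ConnectedWithout (G : Multigraph) (W : Set G.E) : Prop :=
  Nonempty G.V ∧
    ∀ A : Finset G.V, A.Nonempty → A ≠ Finset.univ →
      ∃ e, e ∉ W ∧ ∃ u v, G.ends e = s(u, v) ∧ u ∈ A ∧ v ∉ A

/-- `G` is connected. -/
def Connected (G : Multigraph) : Prop := G.ConnectedWithout ∅

/-- `G` is `k`-edge-connected: deleting any set of at most `k - 1` edges
leaves a connected graph. -/
def EdgeConnected (G : Multigraph) (k : ℕ) : Prop :=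
  ∀ W : Finset G.E, W.card < k → G.ConnectedWithout ↑W

/-- An edge is a bridge if deleting it disconnects the graph. -/
def IsBridge (G : Multigraph) (e : G.E) : Prop := ¬ G.ConnectedWithout {e}

/-- The graph obtained by deleting the vertices in `U` (and all incident edges)
is connected. -/
def ConnectedAvoiding (G : Multigraph) (U : Set G.V) : Prop :=
  (∃ v, v ∉ U) ∧
    ∀ A : Finset G.V, A.Nonempty → (∀ a ∈ A, a ∉ U) → (∃ w, w ∉ U ∧ w ∉ A) →
      ∃ e u v, G.ends e = s(u, v) ∧ u ∈ A ∧ v ∉ A ∧ v ∉ U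

/-- `G` is `k`-vertex-connected: deleting any set of at most `k - 1` vertices
leaves a connected graph. -/
def VertexConnected (G : Multigraph) (k : ℕ) : Prop :=
  ∀ U : Finset G.V, U.card < k → G.ConnectedAvoiding ↑U

/-- `G` is simple: no two distinct edges have the same pair of endpoints. -/
def Simple (G : Multigraph) : Prop :=
  ∀ e e' : G.E, G.ends e = G.ends e' → e = e'

/-- The genus `g(G) = |E| - |V| + 1`. -/
def genus (G : Multigraph) : ℤ :=
  (Fintype.card G.E : ℤ) - (Fintype.card G.V : ℤ) + 1

/-- A tree is a connected graph of genus 0. -/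
def IsTree (G : Multigraph) : Prop := G.Connected ∧ G.genus = 0

/-- The number of edges joining `u` and `v`. -/
noncomputable def numEdges (G : Multigraph) (u v : G.V) : ℕ :=
  Set.ncard {e : G.E | G.ends e = s(u, v)}

/-- The valence of a vertex: the number of incident edges. -/
noncomputable def valence (G : Multigraph) (v : G.V) : ℕ :=
  Set.ncard {e : G.E | v ∈ G.ends e}

/-- A divisor on `G`: an element of the free abelian group on `V(G)`. -/
abbrev Divisor (G : Multigraph) : Type := G.V → ℤ

/-- The degree of a divisor: the sum of its coefficients. -/
def degree (G : Multigraph) (D : G.Divisor) : ℤ := ∑ v, D v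

/-- A divisor is effective if all its coefficients are nonnegative. -/
def Effective (G : Multigraph) (D : G.Divisor) : Prop := ∀ v, 0 ≤ D v

/-- The Laplacian of `G` applied to an integer vector `f`. -/
noncomputable def laplacian (G : Multigraph) (f : G.V → ℤ) : G.Divisor :=
  fun v => ∑ w, (G.numEdges v w : ℤ) * (f v - f w)

/-- Linear equivalence of divisors: the difference is in the image of the Laplacian. -/
def LinEquiv (G : Multigraph) (D D' : G.Divisor) : Prop :=
  ∃ f : G.V → ℤ, D - D' = G.laplacian f

/-- `D - F` is equivalent to an effective divisor for every effective `F` of degree `k`. -/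
def RankGe (G : Multigraph) (D : G.Divisor) (k : ℤ) : Prop :=
  ∀ F : G.Divisor, G.Effective F → G.degree F = k →
    ∃ E' : G.Divisor, G.Effective E' ∧ G.LinEquiv (D - F) E'

/-- The Baker–Norine rank of a divisor. -/
noncomputable def rank (G : Multigraph) (D : G.Divisor) : ℤ :=
  sSup {r : ℤ | r = -1 ∨ (0 ≤ r ∧ G.RankGe D r)}

/-- The (divisorial) gonality of `G`: the minimum degree of an effective divisor
of rank at least 1. -/
noncomputable def gonality (G : Multigraph) : ℕ :=
  sInf {n : ℕ | ∃ D : G.Divisor, G.Effective D ∧ G.degree D = (n : ℤ) ∧ 1 ≤ G.rank D}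

end Multigraph

/-- A morphism of multigraphs: vertices map to vertices, and each edge maps either
to an edge joining the images of its endpoints (if they are distinct) or to the
common image of its endpoints. -/
structure Morphism (G G' : Multigraph) where
  vertexMap : G.V → G'.V
  edgeMap : G.E → G'.E ⊕ G'.V
  map_edge_of_eq : ∀ e u v, G.ends e = s(u, v) → vertexMap u = vertexMap v →
    edgeMap e = Sum.inr (vertexMap u)
  map_edge_of_ne : ∀ e u v, G.ends e = s(u, v) → vertexMap u ≠ vertexMap v →
    ∃ e', edgeMap e = Sum.inl e' ∧ G'.ends e' = s(vertexMap u, vertexMap v)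

namespace Morphism

variable {G G' : Multigraph}

/-- The multiplicity `m_φ(v)` of `φ` at `v` with respect to an edge `e'` of `G'`. -/
noncomputable def mult (φ : Morphism G G') (v : G.V) (e' : G'.E) : ℕ :=
  Set.ncard {e : G.E | v ∈ G.ends e ∧ φ.edgeMap e = Sum.inl e'}

/-- `φ` is harmonic if `m_φ(v)` does not depend on the chosen edge `e'`
incident to `φ(v)`. -/
def Harmonic (φ : Morphism G G') : Prop :=
  ∀ (v : G.V) (e₁ e₂ : G'.E),
    φ.vertexMap v ∈ G'.ends e₁ → φ.vertexMap v ∈ G'.ends e₂ →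
      φ.mult v e₁ = φ.mult v e₂

/-- `φ` is non-degenerate if `m_φ(v) > 0` for every vertex `v`. -/
def Nondegenerate (φ : Morphism G G') : Prop :=
  ∀ (v : G.V) (e' : G'.E), φ.vertexMap v ∈ G'.ends e' → 0 < φ.mult v e'

/-- `φ` has degree `d`: every edge of `G'` has exactly `d` preimages. -/
def HasDegree (φ : Morphism G G') (d : ℕ) : Prop :=
  Nonempty G'.E ∧ ∀ e' : G'.E, Set.ncard {e : G.E | φ.edgeMap e = Sum.inl e'} = d

end Morphism

/-- The Cartesian product `G □ H` of two multigraphs. -/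
noncomputable def cartesianProduct (G H : Multigraph) : Multigraph where
  V := G.V × H.V
  E := (G.E × H.V) ⊕ (G.V × H.E)
  ends := fun e =>
    match e with
    | Sum.inl (e, w) => Sym2.map (fun u => (u, w)) (G.ends e)
    | Sum.inr (v, f) => Sym2.map (fun w => (v, w)) (H.ends f)
  loopless := by
    rintro (⟨e, w⟩ | ⟨v, f⟩) h
    all_goals dsimp only at h
    · have hG := G.loopless e
      generalize hq : G.ends e = q at h hG
      induction q using Sym2.ind with
      | _ x y =>
        rw [Sym2.map_pair_eq, Sym2.mk_isDiag_iff] at h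
        exact hG (Sym2.mk_isDiag_iff.mpr (congrArg Prod.fst h))
    · have hH := H.loopless f
      generalize hq : H.ends f = q at h hH
      induction q using Sym2.ind with
      | _ x y =>
        rw [Sym2.map_pair_eq, Sym2.mk_isDiag_iff] at h
        exact hH (Sym2.mk_isDiag_iff.mpr (congrArg Prod.snd h))

/-- The complete graph `K₃` on three vertices. -/
def K3 : Multigraph where
  V := Fin 3
  E := Fin 3
  ends := fun k => s(k + 1, k + 2)
  loopless := by decide

section Dev

open Finset
attribute [local instance] Classical.propDecidable

namespace Multigraph

variable {G : Multigraph}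

lemma numEdges_symm (u v : G.V) : G.numEdges u v = G.numEdges v u := by
  unfold numEdges
  rw [Sym2.eq_swap]

lemma numEdges_eq_card_filter (u v : G.V) :
    G.numEdges u v = (univ.filter (fun e => G.ends e = s(u,v))).card := by
  rw [numEdges, Set.ncard_eq_toFinset_card']
  congr 1
  ext e
  simp

lemma numEdges_self (u : G.V) : G.numEdges u u = 0 := by
  rw [numEdges]
  convert Set.ncard_empty G.E
  ext e
  simp only [Set.mem_setOf_eq, Set.mem_empty_iff_false, iff_false]
  intro h
  exact G.loopless e (h ▸ Sym2.mk_isDiag_iff.mpr rfl)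

lemma sum_antisym (f : G.V → ℤ) (A : Finset G.V) :
    ∑ x ∈ A, ∑ w ∈ A, (G.numEdges x w : ℤ) * (f x - f w) = 0 := by
  set S := ∑ x ∈ A, ∑ w ∈ A, (G.numEdges x w : ℤ) * (f x - f w) with hS
  have h : S = -S := by
    calc S = ∑ w ∈ A, ∑ x ∈ A, (G.numEdges x w : ℤ) * (f x - f w) := Finset.sum_comm
    _ = ∑ w ∈ A, ∑ x ∈ A, -((G.numEdges w x : ℤ) * (f w - f x)) := by
        apply Finset.sum_congr rfl; intro w _; apply Finset.sum_congr rfl; intro x _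
        rw [numEdges_symm]; ring
    _ = -S := by rw [hS]; simp [Finset.sum_neg_distrib]
  omega

lemma degree_laplacian (f : G.V → ℤ) : G.degree (G.laplacian f) = 0 := by
  unfold degree laplacian
  exact sum_antisym f univ

lemma LinEquiv.degree_eq {D D' : G.Divisor} (h : G.LinEquiv D D') :
    G.degree D = G.degree D' := by
  obtain ⟨f, hf⟩ := h
  have h2 : G.degree (D - D') = 0 := hf ▸ degree_laplacian f
  have : G.degree (D - D') = G.degree D - G.degree D' := by
    unfold degree; simp [Finset.sum_sub_distrib]
  omega

lemma LinEquiv.refl (D : G.Divisor) : G.LinEquiv D D := by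
  refine ⟨0, ?_⟩
  funext v
  simp [laplacian]

lemma LinEquiv.symm {D D' : G.Divisor} (h : G.LinEquiv D D') : G.LinEquiv D' D := by
  obtain ⟨f, hf⟩ := h
  refine ⟨-f, ?_⟩
  funext v
  have := congrFun hf v
  simp only [Pi.sub_apply, laplacian, Pi.neg_apply] at this ⊢
  have h2 : ∑ x : G.V, (G.numEdges v x : ℤ) * (-f v - -f x)
      = -∑ w : G.V, (G.numEdges v w : ℤ) * (f v - f w) := by
    rw [← Finset.sum_neg_distrib]; apply Finset.sum_congr rfl; intros; ring
  omega

lemma LinEquiv.trans {D D' D'' : G.Divisor} (h : G.LinEquiv D D') (h' : G.LinEquiv D' D'') :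
    G.LinEquiv D D'' := by
  obtain ⟨f, hf⟩ := h; obtain ⟨g, hg⟩ := h'
  refine ⟨f + g, ?_⟩
  funext v
  have h1 := congrFun hf v; have h2 := congrFun hg v
  simp only [Pi.sub_apply, laplacian, Pi.add_apply] at h1 h2 ⊢
  have : ∑ w, (G.numEdges v w : ℤ) * (f v + g v - (f w + g w))
      = (∑ w, (G.numEdges v w : ℤ) * (f v - f w)) + ∑ w, (G.numEdges v w : ℤ) * (g v - g w) := by
    rw [← Finset.sum_add_distrib]; apply Finset.sum_congr rfl; intros; ring
  omega

lemma LinEquiv.shift {D D' : G.Divisor} (Z : G.Divisor) (h : G.LinEquiv D D') :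
    G.LinEquiv (D + Z) (D' + Z) := by
  obtain ⟨f, hf⟩ := h
  exact ⟨f, by rw [← hf]; ring⟩

/-- The set of edges crossing the cut `(A, Aᶜ)`. -/
noncomputable def crossFinset (G : Multigraph) (A : Finset G.V) : Finset G.E :=
  univ.filter (fun e => ∃ u v, G.ends e = s(u,v) ∧ u ∈ A ∧ v ∉ A)

lemma sum_numEdges_cross (A : Finset G.V) :
    ∑ x ∈ A, ∑ w ∈ Aᶜ, G.numEdges x w = (G.crossFinset A).card := by
  classical
  have h1 : ∑ x ∈ A, ∑ w ∈ Aᶜ, G.numEdges x w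
      = ∑ p ∈ A ×ˢ Aᶜ, (univ.filter (fun e => G.ends e = s(p.1, p.2))).card := by
    rw [Finset.sum_product]
    exact Finset.sum_congr rfl fun x _ => Finset.sum_congr rfl fun w _ => numEdges_eq_card_filter x w
  rw [h1, ← Finset.card_biUnion]
  · congr 1
    ext e
    simp only [Finset.mem_biUnion, Finset.mem_product, Finset.mem_filter, Finset.mem_univ,
      true_and, crossFinset, Finset.mem_compl]
    constructor
    · rintro ⟨⟨u, v⟩, ⟨hu, hv⟩, he⟩
      exact ⟨u, v, he, hu, by simpa using hv⟩
    · rintro ⟨u, v, he, hu, hv⟩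
      exact ⟨⟨u, v⟩, ⟨hu, by simpa using hv⟩, he⟩
  · rintro ⟨u, v⟩ huv ⟨u', v'⟩ huv' hne
    simp only [Finset.mem_coe, Finset.mem_product, Finset.mem_compl] at huv huv'
    apply Finset.disjoint_left.mpr
    intro e he he'
    simp only [Finset.mem_filter] at he he'
    have := he.2.symm.trans he'.2
    rw [Sym2.eq_iff] at this
    rcases this with ⟨h1, h2⟩ | ⟨h1, h2⟩
    · exact hne (by simp [Prod.ext_iff, h1, h2])
    · exact huv'.2 (h1 ▸ huv.1)

/-- Rigidity: in a graph where every cut has at least 3 edges, linearly equivalent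
effective divisors of degree at most 2 are equal. -/
lemma rigid (h3 : ∀ A : Finset G.V, A.Nonempty → A ≠ univ → 3 ≤ (G.crossFinset A).card)
    {D D' : G.Divisor} (hD : G.Effective D) (hD' : G.Effective D')
    (hdeg : G.degree D ≤ 2) (h : G.LinEquiv D D') : D = D' := by
  obtain ⟨f, hf⟩ := h
  by_cases hVempty : IsEmpty G.V
  · funext v; exact (hVempty.false v).elim
  have hVne : Nonempty G.V := not_isEmpty_iff.mp hVempty
  -- max of f
  obtain ⟨v₀, -, hv₀⟩ := Finset.exists_max_image (univ : Finset G.V) f ⟨Classical.arbitrary G.V, mem_univ _⟩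
  set M := f v₀ with hM
  set A : Finset G.V := univ.filter (fun x => f x = M) with hA
  have hAne : A.Nonempty := ⟨v₀, by simp [hA, hM]⟩
  by_cases hAuniv : A = univ
  · -- f constant, laplacian is 0
    funext v
    have hzero : G.laplacian f v = 0 := by
      unfold laplacian
      apply Finset.sum_eq_zero
      intro w _
      have hfv : f v = M := by have := hAuniv ▸ mem_univ v; simpa [hA] using this
      have hfw : f w = M := by have := hAuniv ▸ mem_univ w; simpa [hA] using this
      rw [hfv, hfw]; ring
    have := congrFun hf v
    rw [hzero] at this
    simp only [Pi.sub_apply] at this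
    omega
  -- f nonconstant; derive contradiction
  exfalso
  have hcut := h3 A hAne hAuniv
  have hsum : ∑ x ∈ A, (D x - D' x) = ∑ x ∈ A, G.laplacian f x := by
    apply Finset.sum_congr rfl
    intro x _
    exact congrFun hf x
  have hsplit : ∑ x ∈ A, G.laplacian f x
      = ∑ x ∈ A, ∑ w ∈ A, (G.numEdges x w : ℤ) * (f x - f w)
        + ∑ x ∈ A, ∑ w ∈ Aᶜ, (G.numEdges x w : ℤ) * (f x - f w) := by
    rw [← Finset.sum_add_distrib]
    apply Finset.sum_congr rfl
    intro x _
    show (∑ w, (G.numEdges x w : ℤ) * (f x - f w)) = _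
    exact (Finset.sum_add_sum_compl A (fun w => (G.numEdges x w : ℤ) * (f x - f w))).symm
  have hlb : (G.crossFinset A).card ≤ ∑ x ∈ A, ∑ w ∈ Aᶜ, (G.numEdges x w : ℤ) * (f x - f w) := by
    rw [← sum_numEdges_cross]
    push_cast
    apply Finset.sum_le_sum
    intro x hx
    apply Finset.sum_le_sum
    intro w hw
    have hfx : f x = M := by simpa [hA] using hx
    have hfw : f w ≠ M := by
      simp only [Finset.mem_compl, hA, Finset.mem_filter, Finset.mem_univ, true_and] at hw
      exact hw
    have hle : f w ≤ M := hv₀ w (mem_univ w)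
    have h1 : 1 ≤ f x - f w := by omega
    nlinarith [Int.ofNat_nonneg (G.numEdges x w)]
  have hub : ∑ x ∈ A, (D x - D' x) ≤ 2 := by
    have h1 : ∑ x ∈ A, D' x ≥ 0 := Finset.sum_nonneg fun x _ => hD' x
    have h2 : ∑ x ∈ A, D x ≤ G.degree D := by
      apply Finset.sum_le_sum_of_subset_of_nonneg (Finset.subset_univ A)
      intro v _ _
      exact hD v
    rw [Finset.sum_sub_distrib]
    omega
  have hz := sum_antisym f A
  rw [hsum, hsplit, hz, zero_add] at hub
  omega


/-- Vertices reachable from `r` without using the edge `e₀`. -/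
inductive Reach (G : Multigraph) (e₀ : G.E) (r : G.V) : G.V → Prop
  | base : Reach G e₀ r r
  | step {u v : G.V} {e : G.E} : Reach G e₀ r u → e ≠ e₀ → G.ends e = s(u, v) →
      Reach G e₀ r v

lemma reach_subset_closed {e₀ : G.E} {r : G.V} (C : Set G.V)
    (hclosed : ∀ e, e ≠ e₀ → ∀ a b, G.ends e = s(a,b) → a ∈ C → b ∈ C)
    (hr : r ∈ C) : ∀ x, Reach G e₀ r x → x ∈ C := by
  intro x hx
  induction hx with
  | base => exact hr
  | step hu hne he ih => exact hclosed _ hne _ _ he ih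

/-- Counting lemma: if every nonempty proper cut is crossed by an edge from `F`,
then `|V| ≤ |F| + 1`. -/
lemma card_le_of_connected_via (F : Finset G.E)
    (hconn : ∀ A : Finset G.V, A.Nonempty → A ≠ univ →
      ∃ e ∈ F, ∃ u v, G.ends e = s(u,v) ∧ u ∈ A ∧ v ∉ A)
    (hne : Nonempty G.V) : Fintype.card G.V ≤ F.card + 1 := by
  classical
  -- grow a spanning forest from a root
  suffices h : ∀ n (A : Finset G.V) (S : Finset G.E), (univ \ A).card = n → A.Nonempty →
      S ⊆ F → (∀ e ∈ S, ∀ u v, G.ends e = s(u,v) → u ∈ A ∧ v ∈ A) →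
      A.card = S.card + 1 → Fintype.card G.V ≤ F.card + 1 by
    obtain ⟨r⟩ := hne
    exact h _ {r} ∅ rfl ⟨r, mem_singleton_self r⟩ (empty_subset F)
      (by simp) (by simp)
  intro n
  induction n using Nat.strong_induction_on with
  | _ n ih =>
    intro A S hn hAne hSF hSin hcard
    by_cases hAu : A = univ
    · have : Fintype.card G.V = A.card := by rw [hAu, Finset.card_univ]
      have : Fintype.card G.V = S.card + 1 := by omega
      have hle := Finset.card_le_card hSF
      omega
    · obtain ⟨e, heF, u, v, he, hu, hv⟩ := hconn A hAne hAu
      have heS : e ∉ S := by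
        intro heS
        exact hv (hSin e heS u v he).2
      refine ih (univ \ insert v A).card ?_ (insert v A) (insert e S) rfl
        ⟨u, mem_insert_of_mem hu⟩ (Finset.insert_subset heF hSF) ?_ ?_
      · have hvmem : v ∈ univ \ A := by simp [hv]
        have hrw : univ \ insert v A = (univ \ A).erase v := by
          ext y
          simp only [Finset.mem_sdiff, Finset.mem_univ, true_and, Finset.mem_erase,
            Finset.mem_insert]
          tauto
        have hnpos : 0 < n := by rw [← hn]; exact Finset.card_pos.mpr ⟨v, hvmem⟩
        rw [hrw, Finset.card_erase_of_mem hvmem, hn]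
        omega
      · intro e' he' a b hab
        rcases Finset.mem_insert.mp he' with rfl | he'S
        · have := hab.symm.trans he
          rw [Sym2.eq_iff] at this
          rcases this with ⟨rfl, rfl⟩ | ⟨rfl, rfl⟩
          · exact ⟨mem_insert_of_mem hu, mem_insert_self _ _⟩
          · exact ⟨mem_insert_self _ _, mem_insert_of_mem hu⟩
        · obtain ⟨ha, hb⟩ := hSin e' he'S a b hab
          exact ⟨mem_insert_of_mem ha, mem_insert_of_mem hb⟩
      · rw [Finset.card_insert_of_notMem hv, Finset.card_insert_of_notMem heS]
        omega

/-- In a connected graph with fewer edges than vertices, every edge is a bridge,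
and firing one side of the bridge yields `δ_u - δ_v`. -/
lemma bridge_principal (hconn : G.Connected) (hcount : Fintype.card G.E < Fintype.card G.V)
    {e₀ : G.E} {u₀ v₀ : G.V} (h : G.ends e₀ = s(u₀, v₀)) :
    G.LinEquiv (fun x => if x = u₀ then 1 else 0) (fun x => if x = v₀ then 1 else 0) := by
  classical
  obtain ⟨hne, hconn'⟩ := hconn
  have hu₀v₀ : u₀ ≠ v₀ := by
    intro hh
    exact G.loopless e₀ (h ▸ Sym2.mk_isDiag_iff.mpr hh)
  -- v₀ is not reachable from u₀ avoiding e₀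
  have hnr : ¬ Reach G e₀ u₀ v₀ := by
    intro hr
    -- then G - e₀ is connected, contradicting the edge count
    have hstrong : ∀ A : Finset G.V, A.Nonempty → A ≠ univ →
        ∃ e ∈ univ.erase e₀, ∃ u v, G.ends e = s(u,v) ∧ u ∈ A ∧ v ∉ A := by
      intro A hAne hAu
      by_contra hno
      push_neg at hno
      have hno' : ∀ e, e ≠ e₀ → ∀ a b, G.ends e = s(a,b) → a ∈ A → b ∈ A := by
        intro e hee a b hab ha
        exact hno e (Finset.mem_erase.mpr ⟨hee, mem_univ e⟩) a b hab ha
      -- whichever of A, Aᶜ contains u₀ is closed and contains u₀ and v₀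
      obtain ⟨e, -, u, v, hab, hu, hv⟩ := hconn' A hAne hAu
      have heq : e = e₀ := by
        by_contra hee
        exact hv (hno' e hee u v hab hu)
      have huv : (u = u₀ ∧ v = v₀) ∨ (u = v₀ ∧ v = u₀) := by
        rw [heq] at hab
        have := hab.symm.trans h
        rwa [Sym2.eq_iff] at this
      by_cases hu₀A : u₀ ∈ A
      · have hAc : ∀ x, Reach G e₀ u₀ x → x ∈ (A : Set G.V) := by
          apply reach_subset_closed
          · intro e' hee a b hab' ha
            exact hno' e' hee a b hab' ha
          · exact hu₀A
        have hv₀A : v₀ ∈ A := hAc v₀ hr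
        rcases huv with ⟨rfl, rfl⟩ | ⟨rfl, rfl⟩
        · exact hv hv₀A
        · exact hv hu₀A
      · -- complement side
        have hAcc : ∀ x, Reach G e₀ u₀ x → x ∈ ((↑A)ᶜ : Set G.V) := by
          apply reach_subset_closed
          · intro e' hee a b hab' ha hb
            have hba : G.ends e' = s(b, a) := by rw [hab', Sym2.eq_swap]
            exact ha (by exact_mod_cast hno' e' hee b a hba (by exact_mod_cast hb))
          · simpa using hu₀A
        have hv₀A : v₀ ∉ A := by simpa using hAcc v₀ hr
        rcases huv with ⟨rfl, rfl⟩ | ⟨rfl, rfl⟩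
        · exact hu₀A hu
        · exact hv₀A hu
    have := card_le_of_connected_via (univ.erase e₀) hstrong ⟨u₀⟩
    rw [Finset.card_erase_of_mem (mem_univ e₀), Finset.card_univ] at this
    have hEpos : 0 < Fintype.card G.E := Fintype.card_pos_iff.mpr ⟨e₀⟩
    omega
  -- the side of u₀
  set S : Finset G.V := univ.filter (Reach G e₀ u₀) with hSdef
  have hu₀S : u₀ ∈ S := by simp only [hSdef, Finset.mem_filter, Finset.mem_univ, true_and]; exact Reach.base
  have hv₀S : v₀ ∉ S := by simp only [hSdef, Finset.mem_filter, Finset.mem_univ, true_and]; exact hnr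
  have hclosed : ∀ e, e ≠ e₀ → ∀ a b, G.ends e = s(a,b) → a ∈ S → b ∈ S := by
    intro e hee a b hab ha
    simp only [hSdef, Finset.mem_filter, Finset.mem_univ, true_and] at ha ⊢
    exact ha.step hee hab
  -- any edge crossing S equals e₀ with orientation (u₀, v₀)
  have hcross : ∀ e a b, G.ends e = s(a,b) → a ∈ S → b ∉ S → e = e₀ ∧ a = u₀ ∧ b = v₀ := by
    intro e a b hab ha hb
    have hee : e = e₀ := by
      by_contra hee
      exact hb (hclosed e hee a b hab ha)
    subst hee
    have := hab.symm.trans h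
    rw [Sym2.eq_iff] at this
    rcases this with ⟨rfl, rfl⟩ | ⟨rfl, rfl⟩
    · exact ⟨rfl, rfl, rfl⟩
    · exact absurd hu₀S (by simpa using hb)
  refine ⟨fun x => if x ∈ S then 1 else 0, ?_⟩
  funext x
  simp only [Pi.sub_apply, laplacian]
  by_cases hx : x ∈ S
  · have hsum2 : ∑ w, (G.numEdges x w : ℤ) * ((if x ∈ S then (1:ℤ) else 0) - (if w ∈ S then 1 else 0))
        = ∑ w ∈ univ.filter (· ∉ S), (G.numEdges x w : ℤ) := by
      have h1 : ∑ w ∈ univ.filter (· ∈ S), (G.numEdges x w : ℤ) * ((if x ∈ S then (1:ℤ) else 0) - (if w ∈ S then 1 else 0)) = 0 := by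
        apply Finset.sum_eq_zero
        intro w hw
        simp only [Finset.mem_filter] at hw
        rw [if_pos hx, if_pos hw.2]; ring
      have h2 : ∑ w ∈ univ.filter (· ∉ S), (G.numEdges x w : ℤ) * ((if x ∈ S then (1:ℤ) else 0) - (if w ∈ S then 1 else 0)) = ∑ w ∈ univ.filter (· ∉ S), (G.numEdges x w : ℤ) := by
        refine Finset.sum_congr rfl fun w hw => ?_
        simp only [Finset.mem_filter] at hw
        rw [if_pos hx, if_neg hw.2]; ring
      rw [← Finset.sum_filter_add_sum_filter_not univ (· ∈ S), h1, h2, zero_add]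
    rw [hsum2]
    by_cases hxu : x = u₀
    · subst hxu
      rw [if_pos rfl, if_neg hu₀v₀]
      rw [Finset.sum_eq_single v₀]
      · have hone : G.numEdges x v₀ = 1 := by
          rw [numEdges_eq_card_filter, Finset.card_eq_one]
          refine ⟨e₀, ?_⟩
          ext e
          simp only [Finset.mem_filter, Finset.mem_univ, true_and, Finset.mem_singleton]
          constructor
          · intro he
            exact (hcross e x v₀ he hu₀S hv₀S).1
          · rintro rfl; exact h
        rw [hone]; norm_num
      · intro w hw hwv
        simp only [Finset.mem_filter, Finset.mem_univ, true_and] at hw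
        have hzero : G.numEdges x w = 0 := by
          rw [numEdges_eq_card_filter, Finset.card_eq_zero]
          ext e
          simp only [Finset.mem_filter, Finset.mem_univ, true_and, Finset.notMem_empty, iff_false]
          intro he
          exact hwv (hcross e x w he hu₀S hw).2.2
        rw [hzero]; norm_num
      · intro hb
        simp only [Finset.mem_filter, Finset.mem_univ, true_and] at hb
        exact absurd hv₀S hb
    · have hxv : x ≠ v₀ := fun hh => hv₀S (hh ▸ hx)
      rw [if_neg hxu, if_neg hxv]
      have hzero : ∑ w ∈ univ.filter (· ∉ S), (G.numEdges x w : ℤ) = 0 := by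
        apply Finset.sum_eq_zero
        intro w hw
        simp only [Finset.mem_filter, Finset.mem_univ, true_and] at hw
        have : G.numEdges x w = 0 := by
          rw [numEdges_eq_card_filter, Finset.card_eq_zero]
          ext e
          simp only [Finset.mem_filter, Finset.mem_univ, true_and, Finset.notMem_empty, iff_false]
          intro he
          exact hxu (hcross e x w he hx hw).2.1
        rw [this]; norm_num
      rw [hzero]; ring
  · have hsum2 : ∑ w, (G.numEdges x w : ℤ) * ((if x ∈ S then (1:ℤ) else 0) - (if w ∈ S then 1 else 0))
        = -∑ w ∈ univ.filter (· ∈ S), (G.numEdges x w : ℤ) := by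
      have h1 : ∑ w ∈ univ.filter (· ∉ S), (G.numEdges x w : ℤ) * ((if x ∈ S then (1:ℤ) else 0) - (if w ∈ S then 1 else 0)) = 0 := by
        apply Finset.sum_eq_zero
        intro w hw
        simp only [Finset.mem_filter] at hw
        rw [if_neg hx, if_neg hw.2]; ring
      have h2 : ∑ w ∈ univ.filter (· ∈ S), (G.numEdges x w : ℤ) * ((if x ∈ S then (1:ℤ) else 0) - (if w ∈ S then 1 else 0)) = -∑ w ∈ univ.filter (· ∈ S), (G.numEdges x w : ℤ) := by
        rw [← Finset.sum_neg_distrib]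
        refine Finset.sum_congr rfl fun w hw => ?_
        simp only [Finset.mem_filter] at hw
        rw [if_neg hx, if_pos hw.2]; ring
      rw [← Finset.sum_filter_add_sum_filter_not univ (· ∈ S), h1, h2, add_zero]
    rw [hsum2]
    by_cases hxv : x = v₀
    · subst hxv
      rw [if_neg (fun hh : x = u₀ => hu₀v₀ hh.symm), if_pos rfl]
      rw [Finset.sum_eq_single u₀]
      · have hone : G.numEdges x u₀ = 1 := by
          rw [numEdges_symm, numEdges_eq_card_filter, Finset.card_eq_one]
          refine ⟨e₀, ?_⟩
          ext e
          simp only [Finset.mem_filter, Finset.mem_univ, true_and, Finset.mem_singleton]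
          constructor
          · intro he
            exact (hcross e u₀ x he hu₀S hv₀S).1
          · rintro rfl; exact h
        rw [hone]; norm_num
      · intro w hw hwu
        simp only [Finset.mem_filter, Finset.mem_univ, true_and] at hw
        have hzero : G.numEdges x w = 0 := by
          rw [numEdges_symm, numEdges_eq_card_filter, Finset.card_eq_zero]
          ext e
          simp only [Finset.mem_filter, Finset.mem_univ, true_and, Finset.notMem_empty, iff_false]
          intro he
          exact hwu (hcross e w x he hw hv₀S).2.1
        rw [hzero]; norm_num
      · intro hb
        simp only [Finset.mem_filter, Finset.mem_univ, true_and] at hb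
        exact absurd hu₀S hb
    · have hxu : x ≠ u₀ := fun hh => hx (hh ▸ hu₀S)
      rw [if_neg hxu, if_neg hxv]
      have hzero : ∑ w ∈ univ.filter (· ∈ S), (G.numEdges x w : ℤ) = 0 := by
        apply Finset.sum_eq_zero
        intro w hw
        simp only [Finset.mem_filter, Finset.mem_univ, true_and] at hw
        have : G.numEdges x w = 0 := by
          rw [numEdges_symm, numEdges_eq_card_filter, Finset.card_eq_zero]
          ext e
          simp only [Finset.mem_filter, Finset.mem_univ, true_and, Finset.notMem_empty, iff_false]
          intro he
          exact hxv (hcross e w x he hw hx).2.2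
        rw [this]; norm_num
      rw [hzero]; ring


/-- In a connected graph with fewer edges than vertices (i.e. a tree), all
vertex classes `δ_v` are linearly equivalent. -/
lemma delta_equiv (hconn : G.Connected) (hcount : Fintype.card G.E < Fintype.card G.V)
    (v w : G.V) :
    G.LinEquiv (fun x => if x = v then 1 else 0) (fun x => if x = w then 1 else 0) := by
  classical
  set C : Finset G.V := univ.filter (fun z => G.LinEquiv (fun x => if x = v then 1 else 0)
    (fun x => if x = z then 1 else 0)) with hC
  have hvC : v ∈ C := by
    simp only [hC, Finset.mem_filter, Finset.mem_univ, true_and]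
    exact LinEquiv.refl _
  have hCuniv : C = univ := by
    by_contra hne
    obtain ⟨e, -, a, b, hab, haC, hbC⟩ := hconn.2 C ⟨v, hvC⟩ hne
    have h1 : G.LinEquiv (fun x => if x = a then 1 else 0) (fun x => if x = b then 1 else 0) :=
      bridge_principal hconn hcount hab
    simp only [hC, Finset.mem_filter, Finset.mem_univ, true_and] at haC hbC
    exact hbC (haC.trans h1)
  have hwC : w ∈ C := hCuniv ▸ mem_univ w
  simpa only [hC, Finset.mem_filter, Finset.mem_univ, true_and] using hwC

end Multigraph

section Product

open Multigraph Finset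

variable (T : Multigraph)

lemma prod_ends_inl (e : T.E) (i : Fin 3) :
    (cartesianProduct T K3).ends (Sum.inl (e, i)) = Sym2.map (fun u => (u, i)) (T.ends e) := rfl

lemma prod_ends_inr (v : T.V) (k : Fin 3) :
    (cartesianProduct T K3).ends (Sum.inr (v, k)) = s((v, k+1), (v, k+2)) := by
  show Sym2.map (fun w => (v, w)) (K3.ends k) = _
  rfl

lemma prod_numEdges_horiz {u u' : T.V} (hne : u ≠ u') (i : Fin 3) :
    (cartesianProduct T K3).numEdges (u, i) (u', i) = T.numEdges u u' := by
  have himg : {e : (cartesianProduct T K3).E | (cartesianProduct T K3).ends e = s((u,i),(u',i))}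
      = (fun e => Sum.inl (e, i)) '' {e : T.E | T.ends e = s(u,u')} := by
    ext e
    simp only [Set.mem_setOf_eq, Set.mem_image]
    constructor
    · intro he
      match e with
      | Sum.inl (e', w) =>
        obtain ⟨a, b, hab⟩ : ∃ a b, T.ends e' = s(a,b) := by
          induction (T.ends e') using Sym2.ind with
          | _ x y => exact ⟨x, y, rfl⟩
        erw [prod_ends_inl, hab, Sym2.map_pair_eq, Sym2.eq_iff] at he
        rcases he with ⟨h1, h2⟩ | ⟨h1, h2⟩
        · obtain ⟨rfl, rfl⟩ := Prod.mk.injEq .. ▸ h1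
          obtain ⟨rfl, -⟩ := Prod.mk.injEq .. ▸ h2
          exact ⟨e', by simp [hab], rfl⟩
        · obtain ⟨rfl, rfl⟩ := Prod.mk.injEq .. ▸ h1
          obtain ⟨rfl, -⟩ := Prod.mk.injEq .. ▸ h2
          exact ⟨e', by simp [hab, Sym2.eq_swap], rfl⟩
      | Sum.inr (x, k) =>
        erw [prod_ends_inr, Sym2.eq_iff] at he
        rcases he with ⟨h1, h2⟩ | ⟨h1, h2⟩
        · exact absurd (((Prod.mk.injEq .. ▸ h1).1).symm.trans ((Prod.mk.injEq .. ▸ h2).1)) hne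
        · exact absurd (((Prod.mk.injEq .. ▸ h2).1).symm.trans ((Prod.mk.injEq .. ▸ h1).1)) hne
    · rintro ⟨e', he', rfl⟩
      erw [prod_ends_inl, he', Sym2.map_pair_eq]
  have hinj : Function.Injective (fun e : T.E => (Sum.inl (e, i) : (cartesianProduct T K3).E)) :=
    fun a b hab => by simp at hab; exact congrArg Prod.fst hab
  exact (congrArg Set.ncard himg).trans (Set.ncard_image_of_injective _ hinj)

lemma prod_numEdges_skew {u u' : T.V} (hne : u ≠ u') {i j : Fin 3} (hij : i ≠ j) :
    (cartesianProduct T K3).numEdges (u, i) (u', j) = 0 := by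
  have hempty : {e : (cartesianProduct T K3).E | (cartesianProduct T K3).ends e = s((u,i),(u',j))}
      = ∅ := by
    ext e
    simp only [Set.mem_setOf_eq, Set.mem_empty_iff_false, iff_false]
    intro he
    match e with
    | Sum.inl (e', w) =>
      obtain ⟨a, b, hab⟩ : ∃ a b, T.ends e' = s(a,b) := by
        induction (T.ends e') using Sym2.ind with
        | _ x y => exact ⟨x, y, rfl⟩
      erw [prod_ends_inl, hab, Sym2.map_pair_eq, Sym2.eq_iff] at he
      rcases he with ⟨h1, h2⟩ | ⟨h1, h2⟩
      · exact hij (((Prod.mk.injEq .. ▸ h1).2).symm.trans ((Prod.mk.injEq .. ▸ h2).2))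
      · exact hij (((Prod.mk.injEq .. ▸ h2).2).symm.trans ((Prod.mk.injEq .. ▸ h1).2))
    | Sum.inr (x, k) =>
      erw [prod_ends_inr, Sym2.eq_iff] at he
      rcases he with ⟨h1, h2⟩ | ⟨h1, h2⟩
      · exact hne (((Prod.mk.injEq .. ▸ h1).1).symm.trans ((Prod.mk.injEq .. ▸ h2).1))
      · exact hne (((Prod.mk.injEq .. ▸ h2).1).symm.trans ((Prod.mk.injEq .. ▸ h1).1))
  exact (congrArg Set.ncard hempty).trans (Set.ncard_empty _)

/-- The Laplacian of a fiberwise-constant function on `T □ K₃` is the lift of the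
Laplacian on `T`. -/
lemma laplacian_lift (g : T.V → ℤ) :
    (cartesianProduct T K3).laplacian (fun p => g p.1) = fun p => T.laplacian g p.1 := by
  classical
  funext p
  obtain ⟨u, i⟩ := p
  show ∑ q : T.V × Fin 3, ((cartesianProduct T K3).numEdges (u,i) q : ℤ) * (g u - g q.1)
      = ∑ w, (T.numEdges u w : ℤ) * (g u - g w)
  rw [Fintype.sum_prod_type]
  apply Finset.sum_congr rfl
  intro u' _
  by_cases huu : u = u'
  · subst huu
    simp [sub_self]
  · have hstep : ∑ j : Fin 3, ((cartesianProduct T K3).numEdges (u,i) (u',j) : ℤ) * (g u - g (u',j).1)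
        = ((cartesianProduct T K3).numEdges (u,i) (u',i) : ℤ) * (g u - g u') := by
      apply Finset.sum_eq_single_of_mem i (Finset.mem_univ i)
      intro j _ hj
      rw [prod_numEdges_skew T huu (Ne.symm hj)]
      simp
    erw [hstep, prod_numEdges_horiz T huu]

end Product

namespace Multigraph



variable {G : Multigraph}

lemma degree_sub (D D' : G.Divisor) : G.degree (D - D') = G.degree D - G.degree D' := by
  unfold degree
  simp [Finset.sum_sub_distrib]

lemma degree_delta (x : G.V) : G.degree (fun y => if y = x then (1:ℤ) else 0) = 1 := by
  unfold degree
  simp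

lemma effective_degree_zero {D : G.Divisor} (hD : G.Effective D) (h : G.degree D = 0) :
    D = 0 := by
  funext x
  have := (Finset.sum_eq_zero_iff_of_nonneg (fun v _ => hD v)).mp h x (mem_univ x)
  simpa using this

lemma effective_degree_one {D : G.Divisor} (hD : G.Effective D) (h : G.degree D = 1) :
    ∃ x, D = fun y => if y = x then 1 else 0 := by
  have hex : ∃ x, 0 < D x := by
    by_contra hno
    push_neg at hno
    have : G.degree D ≤ 0 := Finset.sum_nonpos fun v _ => hno v
    omega
  obtain ⟨x, hx⟩ := hex
  have hsplit : G.degree D = D x + ∑ v ∈ univ.erase x, D v := by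
    rw [degree, ← Finset.add_sum_erase univ D (mem_univ x)]
  have h1 : 0 ≤ ∑ v ∈ univ.erase x, D v := Finset.sum_nonneg fun v _ => hD v
  have hrest0 : ∑ v ∈ univ.erase x, D v = 0 := by omega
  have hDx : D x = 1 := by omega
  have hzero : ∀ v ∈ univ.erase x, D v = 0 := fun v hv =>
    (Finset.sum_eq_zero_iff_of_nonneg fun w _ => hD w).mp hrest0 v hv
  refine ⟨x, funext fun y => ?_⟩
  by_cases hy : y = x
  · subst hy; simpa using hDx
  · simpa [hy] using hzero y (Finset.mem_erase.mpr ⟨hy, mem_univ y⟩)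

lemma rank_bddAbove (D : G.Divisor) (hV : Nonempty G.V) :
    BddAbove {r : ℤ | r = -1 ∨ (0 ≤ r ∧ G.RankGe D r)} := by
  refine ⟨max (G.degree D) 0, ?_⟩
  rintro r (rfl | ⟨hr0, hr⟩)
  · have := le_max_right (G.degree D) (0:ℤ); omega
  · by_contra hgt
    push_neg at hgt
    obtain ⟨x⟩ := hV
    set F : G.Divisor := fun y => if y = x then r else 0 with hF
    have hFeff : G.Effective F := fun y => by by_cases h : y = x <;> simp [hF, h, hr0]
    have hFdeg : G.degree F = r := by rw [degree]; simp [hF]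
    obtain ⟨E', hE'eff, hequiv⟩ := hr F hFeff hFdeg
    have hdegE : G.degree (D - F) = G.degree E' := hequiv.degree_eq
    have h1 : 0 ≤ G.degree E' := Finset.sum_nonneg fun v _ => hE'eff v
    rw [degree_sub, hFdeg] at hdegE
    have h2 : G.degree D < r := lt_of_le_of_lt (le_max_left _ 0) hgt
    omega

lemma one_le_rank_of_rankGe_one {D : G.Divisor} (hV : Nonempty G.V) (h : G.RankGe D 1) :
    1 ≤ G.rank D := by
  unfold rank
  exact le_csSup (rank_bddAbove D hV) (Or.inr ⟨by norm_num, h⟩)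

lemma rankGe_one_of_one_le_rank {D : G.Divisor} (hV : Nonempty G.V) (h : 1 ≤ G.rank D) :
    G.RankGe D 1 := by
  classical
  have hbdd := rank_bddAbove D hV
  have hne : {r : ℤ | r = -1 ∨ (0 ≤ r ∧ G.RankGe D r)}.Nonempty := ⟨-1, Or.inl rfl⟩
  unfold rank at h
  have hex : ∃ r ∈ {r : ℤ | r = -1 ∨ (0 ≤ r ∧ G.RankGe D r)}, 1 ≤ r := by
    by_contra hno
    push_neg at hno
    have hle : sSup {r : ℤ | r = -1 ∨ (0 ≤ r ∧ G.RankGe D r)} ≤ 0 :=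
      csSup_le hne fun r hr => by have := hno r hr; omega
    omega
  obtain ⟨r, hrS, hr1⟩ := hex
  have hrge : G.RankGe D r := by
    rcases hrS with rfl | ⟨-, h2⟩
    · omega
    · exact h2
  intro F hFeff hFdeg
  obtain ⟨x⟩ := hV
  set Z : G.Divisor := fun y => if y = x then r - 1 else 0 with hZ
  have hZeff : ∀ y, 0 ≤ Z y := fun y => by
    by_cases hxy : y = x <;> simp [hZ, hxy] <;> omega
  have hF'eff : G.Effective (F + Z) := fun y => by
    have h1 := hFeff y; have h2 := hZeff y
    simp only [Pi.add_apply]; omega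
  have hF'deg : G.degree (F + Z) = r := by
    have hZdeg : G.degree Z = r - 1 := by rw [degree]; simp [hZ]
    have : G.degree (F + Z) = G.degree F + G.degree Z := by
      unfold degree; simp [Finset.sum_add_distrib]
    omega
  obtain ⟨E', hE'eff, hequiv⟩ := hrge (F + Z) hF'eff hF'deg
  refine ⟨E' + Z, fun y => by have := hE'eff y; have := hZeff y; simp only [Pi.add_apply]; omega, ?_⟩
  have heq : D - F = D - (F + Z) + Z := by funext y; simp; ring
  rw [heq]
  exact hequiv.shift Z

end Multigraph

section Cross

open Multigraph Finset

lemma triangle_aux : ∀ p : Fin 3 → Bool, (∃ i, p i = true) → (∃ j, p j = false) →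
    ∃ k₁ k₂ : Fin 3, k₁ ≠ k₂ ∧ (p (k₁+1) ≠ p (k₁+2)) ∧ (p (k₂+1) ≠ p (k₂+2)) := by decide

variable {T : Multigraph}

lemma prodE_inl_ne_inl {x y : T.E × Fin 3} (h : x ≠ y) :
    (Sum.inl x : (cartesianProduct T K3).E) ≠ Sum.inl y := fun hh => h (Sum.inl.inj hh)

lemma prodE_inl_ne_inr (x : T.E × Fin 3) (y : T.V × Fin 3) :
    (Sum.inl x : (cartesianProduct T K3).E) ≠ Sum.inr y := fun hh => Sum.inl_ne_inr hh

lemma prodE_inr_ne_inr {x y : T.V × Fin 3} (h : x ≠ y) :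
    (Sum.inr x : (cartesianProduct T K3).E) ≠ Sum.inr y := fun hh => h (Sum.inr.inj hh)

lemma vert_cross {A : Finset (cartesianProduct T K3).V} {v : T.V} {k : Fin 3}
    (h : ((v, k+1) ∈ A ∧ (v, k+2) ∉ A) ∨ ((v, k+2) ∈ A ∧ (v, k+1) ∉ A)) :
    (Sum.inr (v, k) : (cartesianProduct T K3).E) ∈ (cartesianProduct T K3).crossFinset A := by
  refine Finset.mem_filter.mpr ⟨Finset.mem_univ _, ?_⟩
  rcases h with ⟨h1, h2⟩ | ⟨h1, h2⟩
  · exact ⟨(v,k+1), (v,k+2), prod_ends_inr T v k, h1, h2⟩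
  · exact ⟨(v,k+2), (v,k+1), (prod_ends_inr T v k).trans (Sym2.eq_swap), h1, h2⟩

lemma horiz_cross {A : Finset (cartesianProduct T K3).V} {e : T.E} {u u' : T.V} {i : Fin 3}
    (he : T.ends e = s(u, u')) (h1 : (u,i) ∈ A) (h2 : (u',i) ∉ A) :
    (Sum.inl (e, i) : (cartesianProduct T K3).E) ∈ (cartesianProduct T K3).crossFinset A := by
  refine Finset.mem_filter.mpr ⟨Finset.mem_univ _, ?_⟩
  refine ⟨(u,i), (u',i), ?_, h1, h2⟩
  rw [prod_ends_inl, he, Sym2.map_pair_eq]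
  rfl

lemma mixed_fiber_two_cross {A : Finset (cartesianProduct T K3).V} {v : T.V}
    (h1 : ∃ i, (v,i) ∈ A) (h2 : ∃ j, (v,j) ∉ A) :
    ∃ k₁ k₂ : Fin 3, k₁ ≠ k₂ ∧ Sum.inr (v,k₁) ∈ (cartesianProduct T K3).crossFinset A ∧
      Sum.inr (v,k₂) ∈ (cartesianProduct T K3).crossFinset A := by
  classical
  set p : Fin 3 → Bool := fun i => decide ((v,i) ∈ A) with hp
  obtain ⟨i, hi⟩ := h1; obtain ⟨j, hj⟩ := h2
  obtain ⟨k₁, k₂, hk, hx1, hx2⟩ := triangle_aux p ⟨i, by simp [hp]; exact hi⟩ ⟨j, by simp [hp]; exact hj⟩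
  have key : ∀ k : Fin 3, p (k+1) ≠ p (k+2) →
      (Sum.inr (v,k) : (cartesianProduct T K3).E) ∈ (cartesianProduct T K3).crossFinset A := by
    intro k hkk
    by_cases hmem : (v, k+1) ∈ A
    · refine vert_cross (Or.inl ⟨hmem, ?_⟩)
      intro hmem2
      exact hkk (by simp [hp, hmem, hmem2])
    · refine vert_cross (Or.inr ⟨?_, hmem⟩)
      by_contra hmem2
      exact hkk (by simp [hp, hmem, hmem2])
  exact ⟨k₁, k₂, hk, key k₁ hx1, key k₂ hx2⟩

lemma cross3 (hconn : T.Connected) (hcard : 2 ≤ Fintype.card T.V) :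
    ∀ A : Finset (cartesianProduct T K3).V, A.Nonempty → A ≠ Finset.univ →
      3 ≤ ((cartesianProduct T K3).crossFinset A).card := by
  classical
  intro A hAne hAuniv
  obtain ⟨hTne, hTconn⟩ := hconn
  have conclude : ∀ e₁ e₂ e₃ : (cartesianProduct T K3).E,
      e₁ ∈ (cartesianProduct T K3).crossFinset A → e₂ ∈ (cartesianProduct T K3).crossFinset A →
      e₃ ∈ (cartesianProduct T K3).crossFinset A → e₁ ≠ e₂ → e₁ ≠ e₃ → e₂ ≠ e₃ →
      3 ≤ ((cartesianProduct T K3).crossFinset A).card := by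
    intro e₁ e₂ e₃ h1 h2 h3 h12 h13 h23
    have : 2 < ((cartesianProduct T K3).crossFinset A).card :=
      Finset.two_lt_card_iff.mpr ⟨e₁, e₂, e₃, h1, h2, h3, h12, h13, h23⟩
    omega
  by_cases hmix2 : ∃ v w : T.V, v ≠ w ∧ ((∃ i, (v,i) ∈ A) ∧ (∃ j, (v,j) ∉ A)) ∧
      ((∃ i, (w,i) ∈ A) ∧ (∃ j, (w,j) ∉ A))
  · obtain ⟨v, w, hvw, ⟨hv1, hv2⟩, hw1, hw2⟩ := hmix2
    obtain ⟨k₁, k₂, hk, hc1, hc2⟩ := mixed_fiber_two_cross hv1 hv2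
    obtain ⟨k₃, -, -, hc3, -⟩ := mixed_fiber_two_cross hw1 hw2
    refine conclude _ _ _ hc1 hc2 hc3 (prodE_inr_ne_inr (by simp [hk]))
      (prodE_inr_ne_inr (by simp [hvw])) (prodE_inr_ne_inr (by simp [hvw]))
  · by_cases hmix1 : ∃ v : T.V, (∃ i, (v,i) ∈ A) ∧ (∃ j, (v,j) ∉ A)
    · obtain ⟨v, hv1, hv2⟩ := hmix1
      have hcol : ∃ i : Fin 3, (∃ u, (u,i) ∈ A) ∧ (∃ u', (u',i) ∉ A) := by
        by_contra hno
        push_neg at hno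
        obtain ⟨i, hi⟩ := hv1
        obtain ⟨j, hj⟩ := hv2
        have hifull : ∀ u, (u,i) ∈ A := hno i ⟨v, hi⟩
        have hjempty : ∀ u, (u,j) ∉ A := by
          intro u hu
          exact hj (hno j ⟨u, hu⟩ v)
        obtain ⟨a, b, hab⟩ := Fintype.exists_pair_of_one_lt_card (by omega) (α := T.V)
        exact hmix2 ⟨a, b, hab, ⟨⟨i, hifull a⟩, ⟨j, hjempty a⟩⟩, ⟨i, hifull b⟩, ⟨j, hjempty b⟩⟩
      obtain ⟨i, ⟨u, hu⟩, ⟨u', hu'⟩⟩ := hcol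
      set Scol : Finset T.V := univ.filter (fun z : T.V => (z,i) ∈ A) with hScol
      have h1 : Scol.Nonempty := ⟨u, by simp [hScol, hu]⟩
      have h2 : Scol ≠ univ := by
        intro hh
        have := hh ▸ mem_univ u'
        rw [hScol] at this
        simp only [Finset.mem_filter, Finset.mem_univ, true_and] at this
        exact hu' this
      obtain ⟨e, -, a, b, hab, ha, hb⟩ := hTconn Scol h1 h2
      rw [hScol] at ha hb
      simp only [Finset.mem_filter, Finset.mem_univ, true_and] at ha hb
      obtain ⟨k₁, k₂, hk, hc1, hc2⟩ := mixed_fiber_two_cross hv1 hv2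
      refine conclude _ _ _ hc1 hc2 (horiz_cross hab ha hb) (prodE_inr_ne_inr (by simp [hk]))
        (prodE_inl_ne_inr _ _).symm (prodE_inl_ne_inr _ _).symm
    · push_neg at hmix1
      set S : Finset T.V := univ.filter (fun z : T.V => (z, (0:Fin 3)) ∈ A) with hS
      obtain ⟨⟨w0, j0⟩, hw0⟩ : ∃ x, x ∉ A := by
        by_contra hh
        push_neg at hh
        exact hAuniv (Finset.eq_univ_iff_forall.mpr hh)
      obtain ⟨⟨v0, i0⟩, hv0⟩ := hAne
      have hSne : S.Nonempty := by
        refine ⟨v0, ?_⟩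
        rw [hS]
        simp only [Finset.mem_filter, Finset.mem_univ, true_and]
        exact hmix1 v0 ⟨i0, hv0⟩ ((0:Fin 3))
      have hSuniv : S ≠ univ := by
        intro hh
        have := hh ▸ mem_univ w0
        rw [hS] at this
        simp only [Finset.mem_filter, Finset.mem_univ, true_and] at this
        exact hw0 (hmix1 w0 ⟨(0:Fin 3), this⟩ j0)
      obtain ⟨e, -, a, b, hab, ha, hb⟩ := hTconn S hSne hSuniv
      rw [hS] at ha hb
      simp only [Finset.mem_filter, Finset.mem_univ, true_and] at ha hb
      have haA : ∀ i : Fin 3, (a,i) ∈ A := fun i => hmix1 a ⟨(0:Fin 3), ha⟩ i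
      have hbA : ∀ i : Fin 3, (b,i) ∉ A := fun i hi => hb (hmix1 b ⟨i, hi⟩ ((0:Fin 3)))
      refine conclude _ _ _ (horiz_cross hab (haA 0) (hbA 0)) (horiz_cross hab (haA 1) (hbA 1))
        (horiz_cross hab (haA 2) (hbA 2))
        (prodE_inl_ne_inl (fun h => (by decide : ¬ (0:Fin 3) = 1) (congrArg Prod.snd h)))
        (prodE_inl_ne_inl (fun h => (by decide : ¬ (0:Fin 3) = 2) (congrArg Prod.snd h)))
        (prodE_inl_ne_inl (fun h => (by decide : ¬ (1:Fin 3) = 2) (congrArg Prod.snd h)))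

end Cross


end Dev
/-- If `T` is a tree with at least two vertices, then
`gon(T □ K₃) = 3`. -/
theorem stmt_16 (T : Multigraph) (hT : T.IsTree) (hcard : 2 ≤ Fintype.card T.V) :
    (cartesianProduct T K3).gonality = 3 := by
  classical
  open Finset Multigraph in
  obtain ⟨hconn, hgenus⟩ := hT
  have hcount : Fintype.card T.E < Fintype.card T.V := by
    unfold Multigraph.genus at hgenus
    omega
  have hTne : Nonempty T.V := Fintype.card_pos_iff.mp (by omega)
  obtain ⟨v₀⟩ := hTne
  have hGne : Nonempty (cartesianProduct T K3).V := ⟨(v₀, (0:Fin 3))⟩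
  have h3cardV : 3 ≤ Fintype.card (cartesianProduct T K3).V := by
    have h01 : ((v₀,(0:Fin 3)) : (cartesianProduct T K3).V)
        ∉ ({(v₀,(1:Fin 3)), (v₀,(2:Fin 3))} : Finset (cartesianProduct T K3).V) := by
      intro hh
      rcases Finset.mem_insert.mp hh with h | h
      · exact (by decide : ¬ (0:Fin 3) = 1) (congrArg Prod.snd h)
      · exact (by decide : ¬ (0:Fin 3) = 2) (congrArg Prod.snd (Finset.mem_singleton.mp h))
    have h12 : ((v₀,(1:Fin 3)) : (cartesianProduct T K3).V)
        ∉ ({(v₀,(2:Fin 3))} : Finset (cartesianProduct T K3).V) := by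
      intro hh
      exact (by decide : ¬ (1:Fin 3) = 2) (congrArg Prod.snd (Finset.mem_singleton.mp hh))
    have hsub := Finset.card_le_univ
      ({(v₀,(0:Fin 3)), (v₀,(1:Fin 3)), (v₀,(2:Fin 3))} : Finset (cartesianProduct T K3).V)
    erw [Finset.card_insert_of_notMem h01, Finset.card_insert_of_notMem h12,
      Finset.card_singleton] at hsub
    omega
  -- the fiber divisor over v₀
  set D : (cartesianProduct T K3).Divisor := fun p => if p.1 = v₀ then 1 else 0 with hD
  have hDeff : (cartesianProduct T K3).Effective D := fun p => by
    by_cases h : p.1 = v₀ <;> simp [hD, h]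
  have hDdeg : (cartesianProduct T K3).degree D = 3 := by
    unfold Multigraph.degree
    have hstep : ∑ p : (cartesianProduct T K3).V, D p
        = ∑ p ∈ Finset.univ.filter (fun p : (cartesianProduct T K3).V => p.1 = v₀), (1:ℤ) := by
      rw [Finset.sum_filter]
    rw [hstep, Finset.sum_const]
    have himg : Finset.univ.filter (fun p : (cartesianProduct T K3).V => p.1 = v₀)
        = (Finset.univ : Finset (Fin 3)).image (fun i => ((v₀, i) : (cartesianProduct T K3).V)) := by
      ext p
      erw [Finset.mem_filter, Finset.mem_image]
      constructor
      · rintro ⟨-, h⟩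
        exact ⟨p.2, Finset.mem_univ _, by rw [← h]; exact Prod.mk.eta⟩
      · rintro ⟨i, -, rfl⟩
        exact ⟨Finset.mem_univ _, rfl⟩
    erw [himg, Finset.card_image_of_injective _ (fun a b hab => (Prod.mk.inj hab).2)]
    erw [Finset.card_univ]
    norm_num [show Fintype.card K3.V = 3 from rfl]
    rfl
  -- all fibers are equivalent
  have hfib : ∀ w : T.V, (cartesianProduct T K3).LinEquiv D (fun p => if p.1 = w then 1 else 0) := by
    intro w
    obtain ⟨g, hg⟩ := Multigraph.delta_equiv hconn hcount v₀ w
    refine ⟨fun p => g p.1, ?_⟩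
    rw [laplacian_lift]
    funext p
    have := congrFun hg p.1
    simpa [hD] using this
  have hrge : (cartesianProduct T K3).RankGe D 1 := by
    intro F hFeff hFdeg
    obtain ⟨x, rfl⟩ := Multigraph.effective_degree_one hFeff hFdeg
    obtain ⟨w, j⟩ := x
    refine ⟨(fun p => if p.1 = w then 1 else 0) - (fun p => if p = (w,j) then 1 else 0), ?_, ?_⟩
    · intro p
      by_cases h1 : p = (w,j)
      · subst h1
        erw [Pi.sub_apply]; simp
      · by_cases h2 : p.1 = w <;> erw [Pi.sub_apply] <;> split_ifs <;> simp_all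
    · obtain ⟨f, hf⟩ := hfib w
      refine ⟨f, ?_⟩
      rw [← hf]
      funext p
      simp only [Pi.sub_apply]
      erw [Pi.sub_apply]
      split_ifs <;> simp_all <;> exact absurd rfl ‹_›
  have h3mem : 3 ∈ {n : ℕ | ∃ D : (cartesianProduct T K3).Divisor,
      (cartesianProduct T K3).Effective D ∧ (cartesianProduct T K3).degree D = (n : ℤ) ∧
        1 ≤ (cartesianProduct T K3).rank D} :=
    ⟨D, hDeff, by rw [hDdeg]; norm_num,
      Multigraph.one_le_rank_of_rankGe_one hGne hrge⟩
  -- lower bound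
  have hlow : ∀ n ∈ {n : ℕ | ∃ D : (cartesianProduct T K3).Divisor,
      (cartesianProduct T K3).Effective D ∧ (cartesianProduct T K3).degree D = (n : ℤ) ∧
        1 ≤ (cartesianProduct T K3).rank D}, 3 ≤ n := by
    rintro n ⟨D', hD'eff, hD'deg, hD'rank⟩
    by_contra hlt
    push_neg at hlt
    have hR1 : (cartesianProduct T K3).RankGe D' 1 :=
      Multigraph.rankGe_one_of_one_le_rank hGne hD'rank
    have h3 := cross3 hconn hcard
    -- first : n ≥ 1
    have hδ0 : (cartesianProduct T K3).degree (fun p => if p = ((v₀,(0:Fin 3)) : (cartesianProduct T K3).V) then 1 else 0) = 1 := by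
      convert Multigraph.degree_delta (G := cartesianProduct T K3) (v₀, (0:Fin 3))
    obtain ⟨E1, hE1eff, hEq1⟩ := hR1 (fun p => if p = ((v₀,(0:Fin 3)) : (cartesianProduct T K3).V) then 1 else 0)
      (fun p => by dsimp only; split_ifs <;> norm_num)
      hδ0
    have hd1 : (cartesianProduct T K3).degree E1 = (n : ℤ) - 1 := by
      rw [← hEq1.degree_eq, Multigraph.degree_sub, hD'deg, hδ0]
    have hE1nn : 0 ≤ (cartesianProduct T K3).degree E1 :=
      Finset.sum_nonneg fun v _ => hE1eff v
    have hn1 : 1 ≤ n := by rw [hd1] at hE1nn; omega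
    -- helper to upgrade equivalences
    have key : ∀ c : (cartesianProduct T K3).V, ∃ E : (cartesianProduct T K3).Divisor,
        (cartesianProduct T K3).Effective E ∧ (cartesianProduct T K3).degree E = (n : ℤ) - 1 ∧
        (cartesianProduct T K3).LinEquiv D' (E + fun p => if p = c then 1 else 0) := by
      intro c
      obtain ⟨E, hEeff, hEq⟩ := hR1 (fun p => if p = c then 1 else 0)
        (fun p => by by_cases h : p = c <;> simp [h]) (Multigraph.degree_delta _)
      refine ⟨E, hEeff, ?_, ?_⟩
      · rw [← hEq.degree_eq, Multigraph.degree_sub, hD'deg, Multigraph.degree_delta]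
      · have := hEq.shift (fun p => if p = c then 1 else 0)
        have heq : D' - (fun p => if p = c then 1 else 0) + (fun p => if p = c then 1 else 0) = D' := by
          funext p; simp only [Pi.add_apply, Pi.sub_apply]; ring
        rwa [heq] at this
    interval_cases n
    · -- n = 1 : D' equivalent and hence equal to every δ_c
      have hall : ∀ c : (cartesianProduct T K3).V, D' = (fun p => if p = c then 1 else 0) := by
        intro c
        obtain ⟨E, hEeff, hEdeg, hEquiv⟩ := key c
        have hE0 : E = 0 := Multigraph.effective_degree_zero hEeff (by omega)
        subst hE0
        have hEquiv' : (cartesianProduct T K3).LinEquiv D' (fun p => if p = c then 1 else 0) := by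
          have heq : (0 : (cartesianProduct T K3).Divisor) + (fun p => if p = c then 1 else 0)
              = fun p => if p = c then 1 else 0 := by
            funext p; simp
          rwa [heq] at hEquiv
        exact Multigraph.rigid h3 hD'eff
          (fun p => by by_cases h : p = c <;> simp [h]) (by rw [hD'deg]; norm_num) hEquiv'
      obtain ⟨c₁, c₂, hc12⟩ := Fintype.exists_pair_of_one_lt_card (by omega)
        (α := (cartesianProduct T K3).V)
      have h1 := congrFun (hall c₁) c₁
      have h2 := congrFun (hall c₂) c₁
      simp at h1
      simp [hc12] at h2
      omega
    · -- n = 2 : D' c ≥ 1 for every c, contradicting degree 2 < |V|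
      have hge1 : ∀ c : (cartesianProduct T K3).V, 1 ≤ D' c := by
        intro c
        obtain ⟨E, hEeff, hEdeg, hEquiv⟩ := key c
        obtain ⟨d, rfl⟩ := Multigraph.effective_degree_one hEeff (by omega)
        have heq : D' = (fun p => if p = d then 1 else 0) + (fun p => if p = c then 1 else 0) :=
          Multigraph.rigid h3 hD'eff
            (fun p => by
              simp only [Pi.add_apply]
              split_ifs <;> norm_num)
            (by rw [hD'deg]; norm_num) hEquiv
        have := congrFun heq c
        simp only [Pi.add_apply] at this
        by_cases h : c = d
        · subst h
          simp at this
          omega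
        · simp [h] at this
          omega
      have hsum : (Fintype.card (cartesianProduct T K3).V : ℤ)
          ≤ (cartesianProduct T K3).degree D' := by
        have := Finset.card_nsmul_le_sum Finset.univ D' 1 (fun c _ => hge1 c)
        unfold Multigraph.degree
        simpa [Finset.card_univ] using this
      rw [hD'deg] at hsum
      have : ((3:ℕ) : ℤ) ≤ (Fintype.card (cartesianProduct T K3).V : ℤ) := by exact_mod_cast h3cardV
      omega
  -- conclude
  unfold Multigraph.gonality
  exact le_antisymm (Nat.sInf_le h3mem) (le_csInf ⟨3, h3mem⟩ hlow)
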